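/- Let U be a finite set with |U| = N, let M ⊆ U be nonempty, let k ≥ 1 be an integer with |M| ≤ k, let 0 < δ < 1, and let s be a natural number with N·log(1/δ)/k ≤ s ≤ N. If R is a subset of U of size s chosen uniformly at random (uniform over all size-s subsets), then P(R ∩ M ≠ ∅) ≥ (1 − δ)·|M|/k. -/

import Mathlib

open Finset in
lemma geom_aux (q : ℝ) (hq0 : 0 ≤ q) (hq1 : q ≤ 1) (m k : ℕ) (hm : m ≤ k) :
    (m : ℝ) * (1 - q ^ k) ≤ (k : ℝ) * (1 - q ^ m) := by
  have hgs : ∀ t : ℕ, 1 - q ^ t = (1 - q) * ∑ i ∈ range t, q ^ i := by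
    intro t
    have h := geom_sum_mul q t
    nlinarith [h]
  rw [hgs m, hgs k]
  have hsum : (m : ℝ) * ∑ i ∈ range k, q ^ i ≤ (k : ℝ) * ∑ i ∈ range m, q ^ i := by
    rcases Nat.eq_zero_or_pos m with hm0 | hm0
    · subst hm0; simp
    have hsplit : ∑ i ∈ range k, q ^ i =
        (∑ i ∈ range m, q ^ i) + ∑ i ∈ Finset.Ico m k, q ^ i := by
      rw [range_eq_Ico, range_eq_Ico]
      exact (Finset.sum_Ico_consecutive (fun i => q ^ i) (Nat.zero_le m) hm).symm
    have hSm : (m : ℝ) * q ^ (m - 1) ≤ ∑ i ∈ range m, q ^ i := by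
      have := Finset.card_nsmul_le_sum (range m) (fun i => q ^ i) (q ^ (m - 1))
        (fun i hi => pow_le_pow_of_le_one hq0 hq1 (by
          simp only [mem_range] at hi; omega))
      simpa [nsmul_eq_mul] using this
    have hT : ∑ i ∈ Finset.Ico m k, q ^ i ≤ ((k : ℝ) - m) * q ^ (m - 1) := by
      have := Finset.sum_le_card_nsmul (Finset.Ico m k) (fun i => q ^ i) (q ^ (m - 1))
        (fun i hi => pow_le_pow_of_le_one hq0 hq1 (by
          simp only [Finset.mem_Ico] at hi; omega))
      have hc : ((Finset.Ico m k).card : ℝ) = (k : ℝ) - m := by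
        rw [Nat.card_Ico]; push_cast [hm]; ring
      calc ∑ i ∈ Finset.Ico m k, q ^ i ≤ (Finset.Ico m k).card • q ^ (m - 1) := this
        _ = ((k : ℝ) - m) * q ^ (m - 1) := by rw [nsmul_eq_mul, hc]
    have hmk : (m : ℝ) ≤ k := by exact_mod_cast hm
    have hq' : 0 ≤ q ^ (m - 1) := pow_nonneg hq0 _
    nlinarith [hSm, hT]
  have h1q : 0 ≤ 1 - q := by linarith
  calc (m : ℝ) * ((1 - q) * ∑ i ∈ range k, q ^ i)
      = (1 - q) * ((m : ℝ) * ∑ i ∈ range k, q ^ i) := by ring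
    _ ≤ (1 - q) * ((k : ℝ) * ∑ i ∈ range m, q ^ i) :=
        mul_le_mul_of_nonneg_left hsum h1q
    _ = (k : ℝ) * ((1 - q) * ∑ i ∈ range m, q ^ i) := by ring


lemma choose_ratio_bound (n s : ℕ) (hs : s ≤ n) (hn : 0 < n) :
    ∀ m, m ≤ n → ((n - m).choose s : ℝ) ≤ (n.choose s : ℝ) * (1 - (s : ℝ) / n) ^ m := by
  have hq0 : (0:ℝ) ≤ 1 - (s:ℝ)/n := by
    rw [sub_nonneg, div_le_one (by positivity)]; exact_mod_cast hs
  intro m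
  induction m with
  | zero => intro _; simp
  | succ m ih =>
    intro hm1
    have ihm := ih (by omega)
    set a := n - (m + 1) with ha
    have ha1 : n - m = a + 1 := by omega
    by_cases hcase : s ≤ a
    · have hpos : (0:ℝ) < (a:ℝ) + 1 := by positivity
      have h := Nat.choose_mul_succ_eq a s
      have h' : (a.choose s : ℝ) * ((a:ℝ) + 1) = ((a+1).choose s : ℝ) * (((a:ℝ)+1) - s) := by
        calc (a.choose s : ℝ) * ((a:ℝ)+1) = ((a.choose s * (a+1) : ℕ) : ℝ) := by push_cast; ring
          _ = (((a+1).choose s * (a+1-s) : ℕ) : ℝ) := by rw [h]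
          _ = ((a+1).choose s : ℝ) * (((a:ℝ)+1) - s) := by
              push_cast [Nat.cast_sub (show s ≤ a+1 by omega)]; ring
      have key : (a.choose s : ℝ) = ((a+1).choose s : ℝ) * (1 - (s:ℝ)/((a:ℝ)+1)) := by
        field_simp at h' ⊢
        linarith [h']
      have hq'0 : (0:ℝ) ≤ 1 - (s:ℝ)/((a:ℝ)+1) := by
        rw [sub_nonneg, div_le_one hpos]
        have : (s:ℝ) ≤ (a:ℝ) := by exact_mod_cast hcase
        linarith
      have hq'q : 1 - (s:ℝ)/((a:ℝ)+1) ≤ 1 - (s:ℝ)/n := by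
        have han : (a:ℝ) + 1 ≤ n := by
          have : a + 1 ≤ n := by omega
          exact_mod_cast this
        have := div_le_div_of_nonneg_left (by positivity : (0:ℝ) ≤ (s:ℝ)) hpos han
        linarith
      have ihm' : (((a+1)).choose s : ℝ) ≤ (n.choose s : ℝ) * (1 - (s:ℝ)/n) ^ m := by
        rw [ha1] at ihm; exact_mod_cast ihm
      calc ((n - (m+1)).choose s : ℝ) = (a.choose s : ℝ) := by rw [ha]
        _ = ((a+1).choose s : ℝ) * (1 - (s:ℝ)/((a:ℝ)+1)) := key
        _ ≤ ((n.choose s : ℝ) * (1 - (s:ℝ)/n) ^ m) * (1 - (s:ℝ)/n) := by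
            apply mul_le_mul ihm' hq'q hq'0
            positivity
        _ = (n.choose s : ℝ) * (1 - (s:ℝ)/n) ^ (m+1) := by ring
    · have hz : (n - (m+1)).choose s = 0 := Nat.choose_eq_zero_of_lt (by omega)
      rw [hz]
      push_cast
      exact mul_nonneg (by positivity) (pow_nonneg hq0 _)


/-- A uniformly random size-s subset R of U hits a nonempty subset M (with
|M| ≤ k and s ≥ N·log(1/δ)/k) with probability at least (1−δ)·|M|/k.
The probability is expressed by counting size-s subsets. -/
theorem random_subset_hits {α : Type*} [DecidableEq α]
    (U M : Finset α) (N k s : ℕ)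
    (hN : U.card = N) (hM : M ⊆ U) (hMne : M.Nonempty)
    (hk : 1 ≤ k) (hMk : M.card ≤ k)
    (δ : ℝ) (hδ0 : 0 < δ) (hδ1 : δ < 1)
    (hs1 : (N : ℝ) * Real.log (1 / δ) / k ≤ s) (hs2 : s ≤ N) :
    (1 - δ) * M.card / k ≤
      (((U.powersetCard s).filter fun R => (R ∩ M).Nonempty).card : ℝ) /
        ((U.powersetCard s).card : ℝ) := by
  classical
  set m := M.card with hm
  have hm1 : 1 ≤ m := Finset.card_pos.mpr hMne
  have hmN : m ≤ N := hN ▸ Finset.card_le_card hM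
  have hN0 : 0 < N := lt_of_lt_of_le hm1 hmN
  -- counting
  have hPcard : (U.powersetCard s).card = N.choose s := by
    rw [Finset.card_powersetCard, hN]
  have hmissset : (U.powersetCard s).filter (fun R => ¬(R ∩ M).Nonempty)
      = (U \ M).powersetCard s := by
    ext R
    simp only [Finset.mem_filter, Finset.mem_powersetCard,
      Finset.not_nonempty_iff_eq_empty, Finset.subset_sdiff,
      ← Finset.disjoint_iff_inter_eq_empty]
    tauto
  have hmiss : ((U.powersetCard s).filter (fun R => ¬(R ∩ M).Nonempty)).card
      = (N - m).choose s := by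
    rw [hmissset, Finset.card_powersetCard, Finset.card_sdiff_of_subset hM, hN]
  have hsplit := Finset.card_filter_add_card_filter_not
    (s := U.powersetCard s) (p := fun R => (R ∩ M).Nonempty)
  have hchoosele : (N - m).choose s ≤ N.choose s :=
    Nat.choose_le_choose s (by omega)
  have hhit : (((U.powersetCard s).filter fun R => (R ∩ M).Nonempty).card)
      = N.choose s - (N - m).choose s := by
    rw [hmiss, hPcard] at hsplit
    omega
  -- real analysis
  set q : ℝ := 1 - (s : ℝ) / N with hq
  have hN0' : (0:ℝ) < N := by exact_mod_cast hN0
  have hk0 : (0:ℝ) < k := by exact_mod_cast hk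
  have hq0 : 0 ≤ q := by
    rw [hq, sub_nonneg, div_le_one hN0']
    exact_mod_cast hs2
  have hq1 : q ≤ 1 := by
    rw [hq]
    have : (0:ℝ) ≤ (s:ℝ) / N := by positivity
    linarith
  have hB : ((N - m).choose s : ℝ) ≤ (N.choose s : ℝ) * q ^ m :=
    choose_ratio_bound N s hs2 hN0 m hmN
  have hqexp : q ≤ Real.exp (-((s:ℝ) / N)) := by
    have := Real.add_one_le_exp (-((s:ℝ) / N))
    linarith
  have hL : Real.log (1 / δ) ≤ (s:ℝ) * k / N := by
    rw [div_le_iff₀ hk0] at hs1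
    rw [le_div_iff₀ hN0']
    nlinarith [hs1]
  have hqk : q ^ k ≤ δ := by
    calc q ^ k ≤ Real.exp (-((s:ℝ) / N)) ^ k := pow_le_pow_left₀ hq0 hqexp k
      _ = Real.exp ((k:ℝ) * (-((s:ℝ) / N))) := (Real.exp_nat_mul _ k).symm
      _ ≤ Real.exp (Real.log δ) := by
          apply Real.exp_le_exp.mpr
          have : Real.log (1 / δ) = - Real.log δ := by
            rw [one_div, Real.log_inv]
          rw [this] at hL
          have : (k:ℝ) * (-((s:ℝ) / N)) = -((s:ℝ) * k / N) := by ring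
          rw [this]
          linarith
      _ = δ := Real.exp_log hδ0
  have hgeom : (m : ℝ) * (1 - q ^ k) ≤ (k : ℝ) * (1 - q ^ m) :=
    geom_aux q hq0 hq1 m k hMk
  have hfin : (m : ℝ) * (1 - δ) ≤ (k : ℝ) * (1 - q ^ m) := by
    have hm0 : (0:ℝ) ≤ m := by positivity
    nlinarith [hgeom, hqk]
  -- finish
  rw [hhit, hPcard]
  have hC0 : (0:ℝ) < (N.choose s : ℝ) := by
    exact_mod_cast Nat.choose_pos hs2
  have hcast : ((N.choose s - (N - m).choose s : ℕ) : ℝ)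
      = (N.choose s : ℝ) - ((N - m).choose s : ℝ) := by
    push_cast [Nat.cast_sub hchoosele]; ring
  rw [hcast, div_le_div_iff₀ hk0 hC0]
  have h1 : ((N - m).choose s : ℝ) * k ≤ (N.choose s : ℝ) * q ^ m * k :=
    mul_le_mul_of_nonneg_right hB hk0.le
  have h2 : (N.choose s : ℝ) * ((m : ℝ) * (1 - δ)) ≤ (N.choose s : ℝ) * ((k : ℝ) * (1 - q ^ m)) :=
    mul_le_mul_of_nonneg_left hfin hC0.le
  nlinarith [h1, h2]
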